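/- Let Φ(x) := (sin(2x), sin(x)) ∈ ℝ² (a column vector), and define the 2×2 matrix-valued function Q(x) := diag(−3, 0) − 2·(d/dx)[ Φ(x)·Φ(x)ᵀ / (1 + ∫₀ˣ (sin²(2t) + sin²(t)) dt) ] for x ∈ [0,π]; explicitly, Φ(x)·Φ(x)ᵀ is the matrix with entries sin²(2x), sin(2x)·sin(x), sin(x)·sin(2x), sin²(x). Then Q is continuously differentiable and there exists x ∈ (0,π) such that Q(x)·Q'(x) ≠ Q'(x)·Q(x); in particular, the matrices Q(x), x ∈ [0,π], are not simultaneously diagonalizable. -/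

import Mathlib

open Matrix MeasureTheory Set Filter

attribute [local instance] Matrix.normedAddCommGroup Matrix.normedSpace


noncomputable section EPotAux2
def gg (s : ℝ) : ℝ := 1 + s - Real.sin (4*s)/8 - Real.sin (2*s)/4
def ggd (s : ℝ) : ℝ := 1 - Real.cos (4*s)/2 - Real.cos (2*s)/2

def m00 (s : ℝ) : ℝ := Real.sin (2*s)^2
def m01 (s : ℝ) : ℝ := Real.sin (2*s) * Real.sin s
def m11 (s : ℝ) : ℝ := Real.sin s^2
def m00d (s : ℝ) : ℝ := 4 * Real.sin (2*s) * Real.cos (2*s)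
def m01d (s : ℝ) : ℝ := 2 * Real.cos (2*s) * Real.sin s + Real.sin (2*s) * Real.cos s
def m11d (s : ℝ) : ℝ := 2 * Real.sin s * Real.cos s
def m00dd (s : ℝ) : ℝ := 8 * Real.cos (2*s)^2 - 8 * Real.sin (2*s)^2
def m01dd (s : ℝ) : ℝ := -5 * Real.sin (2*s) * Real.sin s + 4 * Real.cos (2*s) * Real.cos s
def m11dd (s : ℝ) : ℝ := 2 * Real.cos s^2 - 2 * Real.sin s^2

lemma hsin2 (s : ℝ) : HasDerivAt (fun s : ℝ => Real.sin (2*s)) (Real.cos (2*s) * 2) s := by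
  simpa [Function.comp_def] using
    (Real.hasDerivAt_sin (2*s)).comp s (by simpa using (hasDerivAt_id s).const_mul 2)

lemma hcos2 (s : ℝ) : HasDerivAt (fun s : ℝ => Real.cos (2*s)) (-Real.sin (2*s) * 2) s := by
  simpa [Function.comp_def] using
    (Real.hasDerivAt_cos (2*s)).comp s (by simpa using (hasDerivAt_id s).const_mul 2)

lemma hm00 (s : ℝ) : HasDerivAt m00 (m00d s) s := by
  unfold m00 m00d
  convert! (hsin2 s).fun_pow 2 using 1
  ring

lemma hm01 (s : ℝ) : HasDerivAt m01 (m01d s) s := by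
  unfold m01 m01d
  convert! (hsin2 s).fun_mul (Real.hasDerivAt_sin s) using 1
  ring

lemma hm11 (s : ℝ) : HasDerivAt m11 (m11d s) s := by
  unfold m11 m11d
  convert! (Real.hasDerivAt_sin s).fun_pow 2 using 1
  ring

lemma hm00d (s : ℝ) : HasDerivAt m00d (m00dd s) s := by
  have hfun : m00d = fun x : ℝ => 4 * (Real.sin (2*x) * Real.cos (2*x)) := by
    funext x; unfold m00d; ring
  rw [hfun]
  convert! ((hsin2 s).fun_mul (hcos2 s)).const_mul 4 using 1
  unfold m00dd; ring

lemma hm01d (s : ℝ) : HasDerivAt m01d (m01dd s) s := by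
  have hfun : m01d = fun x : ℝ => 2 * Real.cos (2*x) * Real.sin x + Real.sin (2*x) * Real.cos x := by
    funext x; unfold m01d; ring
  rw [hfun]
  convert! (((hcos2 s).const_mul 2).fun_mul (Real.hasDerivAt_sin s)).fun_add
    ((hsin2 s).fun_mul (Real.hasDerivAt_cos s)) using 1
  unfold m01dd; ring

lemma hm11d (s : ℝ) : HasDerivAt m11d (m11dd s) s := by
  have hfun : m11d = fun x : ℝ => 2 * (Real.sin x * Real.cos x) := by
    funext x; unfold m11d; ring
  rw [hfun]
  convert! ((Real.hasDerivAt_sin s).fun_mul (Real.hasDerivAt_cos s)).const_mul 2 using 1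
  unfold m11dd; ring

def cc (s : ℝ) : ℝ := (gg s)⁻¹
def ccd (s : ℝ) : ℝ := -ggd s / gg s ^ 2
def ggdd (s : ℝ) : ℝ := 2*Real.sin (4*s) + Real.sin (2*s)

lemma hgg (s : ℝ) : HasDerivAt gg (ggd s) s := by
  unfold gg ggd
  have h4 : HasDerivAt (fun s : ℝ => Real.sin (4*s)) (Real.cos (4*s) * 4) s := by
    simpa [Function.comp_def] using
      (Real.hasDerivAt_sin (4*s)).comp s (by simpa using (hasDerivAt_id s).const_mul 4)
  have := (((hasDerivAt_const s (1:ℝ)).fun_add (hasDerivAt_id s)).fun_sub (h4.div_const 8)).fun_sub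
    ((hsin2 s).div_const 4)
  convert! this using 1; ring

lemma hggd (s : ℝ) : HasDerivAt ggd (ggdd s) s := by
  unfold ggd ggdd
  have h4 : HasDerivAt (fun s : ℝ => Real.cos (4*s)) (-Real.sin (4*s) * 4) s := by
    simpa [Function.comp_def] using
      (Real.hasDerivAt_cos (4*s)).comp s (by simpa using (hasDerivAt_id s).const_mul 4)
  have := ((hasDerivAt_const s (1:ℝ)).fun_sub (h4.div_const 2)).fun_sub ((hcos2 s).div_const 2)
  convert! this using 1; ring

def ccdd (s : ℝ) : ℝ := (2 * ggd s ^ 2 - ggdd s * gg s) / gg s ^ 3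

lemma hcc {s : ℝ} (hs : gg s ≠ 0) : HasDerivAt cc (ccd s) s := by
  unfold cc ccd
  simpa using (hgg s).fun_inv hs

lemma hccd {s : ℝ} (hs : gg s ≠ 0) : HasDerivAt ccd (ccdd s) s := by
  unfold ccd
  have h := ((hggd s).fun_neg.fun_div ((hgg s).fun_pow 2) (pow_ne_zero 2 hs))
  convert! h using 1
  unfold ccdd
  field_simp
  ring

-- entries of deriv F
def e00 (s : ℝ) : ℝ := ccd s * m00 s + cc s * m00d s
def e01 (s : ℝ) : ℝ := ccd s * m01 s + cc s * m01d s
def e11 (s : ℝ) : ℝ := ccd s * m11 s + cc s * m11d s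
def e00d (s : ℝ) : ℝ := ccdd s * m00 s + 2 * ccd s * m00d s + cc s * m00dd s
def e01d (s : ℝ) : ℝ := ccdd s * m01 s + 2 * ccd s * m01d s + cc s * m01dd s
def e11d (s : ℝ) : ℝ := ccdd s * m11 s + 2 * ccd s * m11d s + cc s * m11dd s

lemma he00 {s : ℝ} (hs : gg s ≠ 0) : HasDerivAt e00 (e00d s) s := by
  unfold e00
  convert! ((hccd hs).fun_mul (hm00 s)).fun_add ((hcc hs).fun_mul (hm00d s)) using 1
  unfold e00d; ring

lemma he01 {s : ℝ} (hs : gg s ≠ 0) : HasDerivAt e01 (e01d s) s := by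
  unfold e01
  convert! ((hccd hs).fun_mul (hm01 s)).fun_add ((hcc hs).fun_mul (hm01d s)) using 1
  unfold e01d; ring

lemma he11 {s : ℝ} (hs : gg s ≠ 0) : HasDerivAt e11 (e11d s) s := by
  unfold e11
  convert! ((hccd hs).fun_mul (hm11 s)).fun_add ((hcc hs).fun_mul (hm11d s)) using 1
  unfold e11d; ring

lemma hasDerivAt_matrix {f00 f01 f10 f11 g00 g01 g10 g11 : ℝ → ℝ} {x : ℝ}
    (h00 : HasDerivAt f00 (g00 x) x) (h01 : HasDerivAt f01 (g01 x) x)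
    (h10 : HasDerivAt f10 (g10 x) x) (h11 : HasDerivAt f11 (g11 x) x) :
    HasDerivAt (fun s => (!![f00 s, f01 s; f10 s, f11 s] : Matrix (Fin 2) (Fin 2) ℝ))
      !![g00 x, g01 x; g10 x, g11 x] x := by
  apply hasDerivAt_pi.2
  intro i
  apply hasDerivAt_pi.2
  intro j
  fin_cases i <;> fin_cases j <;> simpa using ‹_›

def Finner : ℝ → Matrix (Fin 2) (Fin 2) ℝ := fun s =>
  (1 + ∫ t in (0:ℝ)..s, (Real.sin (2 * t)) ^ 2 + (Real.sin t) ^ 2)⁻¹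
    • Matrix.vecMulVec ![Real.sin (2 * s), Real.sin s] ![Real.sin (2 * s), Real.sin s]

def ggd' (s : ℝ) : ℝ := 1 - Real.cos (4*s)/2 - Real.cos (2*s)/2

lemma ggd_eq (t : ℝ) : ggd t = Real.sin (2*t)^2 + Real.sin t^2 := by
  have h1 : Real.sin (2*t)^2 = 1/2 - Real.cos (2*(2*t))/2 := Real.sin_sq_eq_half_sub _
  have h2 : Real.sin t^2 = 1/2 - Real.cos (2*t)/2 := Real.sin_sq_eq_half_sub _
  have h3 : (2:ℝ)*(2*t) = 4*t := by ring
  rw [h3] at h1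
  unfold ggd; rw [h1, h2]; ring

lemma hint (s : ℝ) : (1 + ∫ t in (0:ℝ)..s, (Real.sin (2*t))^2 + (Real.sin t)^2) = gg s := by
  have : (∫ t in (0:ℝ)..s, (Real.sin (2*t))^2 + (Real.sin t)^2) = gg s - gg 0 := by
    apply intervalIntegral.integral_eq_sub_of_hasDerivAt
    · intro t _; simpa [ggd_eq] using hgg t
    · apply Continuous.intervalIntegrable; fun_prop
  rw [this]; unfold gg; simp

lemma Finner_eq : Finner = fun s =>
    (!![cc s * m00 s, cc s * m01 s; cc s * m01 s, cc s * m11 s] : Matrix (Fin 2) (Fin 2) ℝ) := by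
  funext s
  have h := hint s
  ext i j
  fin_cases i <;> fin_cases j <;>
    simp [Finner, Matrix.smul_apply, Matrix.vecMulVec_apply, h, cc, m00, m01, m11] <;> first | ring1 | exact Or.inl (by ring)

lemma hFderiv {s : ℝ} (hs : gg s ≠ 0) :
    HasDerivAt Finner !![e00 s, e01 s; e01 s, e11 s] s := by
  rw [Finner_eq]
  have h00 : HasDerivAt (fun s => cc s * m00 s) (e00 s) s := by
    unfold e00; exact (hcc hs).mul (hm00 s)
  have h01 : HasDerivAt (fun s => cc s * m01 s) (e01 s) s := by
    unfold e01; exact (hcc hs).mul (hm01 s)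
  have h11 : HasDerivAt (fun s => cc s * m11 s) (e11 s) s := by
    unfold e11; exact (hcc hs).mul (hm11 s)
  exact hasDerivAt_matrix (g00 := e00) (g01 := e01) (g10 := e01) (g11 := e11) h00 h01 h01 h11

def Qmat (s : ℝ) : Matrix (Fin 2) (Fin 2) ℝ :=
  !![-3 - 2*e00 s, -2*e01 s; -2*e01 s, -2*e11 s]

lemma gg_pos {s : ℝ} (hs : -1/2 < s) : 0 < gg s := by
  unfold gg
  nlinarith [Real.neg_one_le_sin (4*s), Real.sin_le_one (4*s),
    Real.neg_one_le_sin (2*s), Real.sin_le_one (2*s)]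

open Real in
lemma hgx : gg (π/2) = 1 + π/2 := by
  have e2 : (2:ℝ)*(π/2) = π := by ring
  have e4 : (4:ℝ)*(π/2) = 2*π := by ring
  unfold gg; rw [e2, e4, Real.sin_pi, Real.sin_two_pi]; ring

open Real in
lemma hgne : gg (π/2) ≠ 0 := by
  rw [hgx]; have := Real.pi_pos; intro h; linarith

open Real in
lemma hgdx : ggd (π/2) = 1 := by
  have e2 : (2:ℝ)*(π/2) = π := by ring
  have e4 : (4:ℝ)*(π/2) = 2*π := by ring
  unfold ggd; rw [e2, e4, Real.cos_pi, Real.cos_two_pi]; norm_num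

open Real in
lemma hgddx : ggdd (π/2) = 0 := by
  have e2 : (2:ℝ)*(π/2) = π := by ring
  have e4 : (4:ℝ)*(π/2) = 2*π := by ring
  unfold ggdd; rw [e2, e4, Real.sin_pi, Real.sin_two_pi]; ring

open Real in
lemma he00x : e00 (π/2) = 0 := by
  have e2 : (2:ℝ)*(π/2) = π := by ring
  unfold e00 ccd cc m00 m00d; rw [e2, Real.sin_pi]; ring

open Real in
lemma he01x : e01 (π/2) = -2/(1+π/2) := by
  have e2 : (2:ℝ)*(π/2) = π := by ring
  unfold e01 ccd cc m01 m01d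
  rw [e2, Real.sin_pi, Real.cos_pi, Real.sin_pi_div_two, Real.cos_pi_div_two, hgx]
  ring

open Real in
lemma he11x : e11 (π/2) = -1/(1+π/2)^2 := by
  unfold e11 ccd cc m11 m11d
  rw [Real.sin_pi_div_two, Real.cos_pi_div_two, hgx, hgdx]
  ring

open Real in
lemma he00dx : e00d (π/2) = 8/(1+π/2) := by
  have e2 : (2:ℝ)*(π/2) = π := by ring
  unfold e00d ccdd ccd cc m00 m00d m00dd
  rw [e2, Real.sin_pi, Real.cos_pi, hgx, hgdx, hgddx]
  ring

open Real in
lemma he01dx : e01d (π/2) = 4/(1+π/2)^2 := by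
  have e2 : (2:ℝ)*(π/2) = π := by ring
  unfold e01d ccdd ccd cc m01 m01d m01dd
  rw [e2, Real.sin_pi, Real.cos_pi, Real.sin_pi_div_two, Real.cos_pi_div_two, hgx, hgdx, hgddx]
  ring

open Real in
lemma he11dx : e11d (π/2) = 2/(1+π/2)^3 - 2/(1+π/2) := by
  unfold e11d ccdd ccd cc m11 m11d m11dd
  rw [Real.sin_pi_div_two, Real.cos_pi_div_two, hgx, hgdx, hgddx]
  ring

lemma he000 : e00 0 = 0 := by unfold e00 ccd cc m00 m00d; norm_num
lemma he010 : e01 0 = 0 := by unfold e01 ccd cc m01 m01d; norm_num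
lemma he110 : e11 0 = 0 := by unfold e11 ccd cc m11 m11d; norm_num

open Real in
lemma hQmatx : Qmat (π/2) = !![-3, 4/(1+π/2); 4/(1+π/2), 2/(1+π/2)^2] := by
  unfold Qmat; rw [he00x, he01x, he11x]
  ext i j; fin_cases i <;> fin_cases j <;> simp <;> ring1

lemma hQmat0 : Qmat 0 = !![-3, 0; 0, 0] := by
  unfold Qmat; rw [he000, he010, he110]
  ext i j; fin_cases i <;> fin_cases j <;> simp

lemma entry00 : (fun s => Qmat s 0 0) = fun s => -3 - 2 * e00 s := by
  funext s; simp [Qmat]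
lemma entry01 : (fun s => Qmat s 0 1) = fun s => -2 * e01 s := by
  funext s; simp [Qmat]
lemma entry10 : (fun s => Qmat s 1 0) = fun s => -2 * e01 s := by
  funext s; simp [Qmat]
lemma entry11 : (fun s => Qmat s 1 1) = fun s => -2 * e11 s := by
  funext s; simp [Qmat]

open Real in
lemma hder00 : deriv (fun s => Qmat s 0 0) (π/2) = -16/(1+π/2) := by
  rw [entry00]
  have h : HasDerivAt (fun s => -3 - 2 * e00 s) (-2 * e00d (π/2)) (π/2) := by
    convert! (hasDerivAt_const (π/2) (-3:ℝ)).fun_sub ((he00 hgne).const_mul 2) using 1; ring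
  rw [h.deriv, he00dx]; ring

open Real in
lemma hder01 : deriv (fun s => Qmat s 0 1) (π/2) = -8/(1+π/2)^2 := by
  rw [entry01, ((he01 hgne).const_mul (-2)).deriv, he01dx]; ring

open Real in
lemma hder10 : deriv (fun s => Qmat s 1 0) (π/2) = -8/(1+π/2)^2 := by
  rw [entry10, ((he01 hgne).const_mul (-2)).deriv, he01dx]; ring

open Real in
lemma hder11 : deriv (fun s => Qmat s 1 1) (π/2) = 4/(1+π/2) - 4/(1+π/2)^3 := by
  rw [entry11, ((he11 hgne).const_mul (-2)).deriv, he11dx]; ring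

lemma hUne : ∀ s ∈ Ioi (-1/2 : ℝ), gg s ≠ 0 := fun _ hs => ne_of_gt (gg_pos hs)

lemma hsmQmat : ContDiffOn ℝ 1 Qmat (Ioi (-1/2 : ℝ)) := by
  have csin : ContDiff ℝ 1 Real.sin := Real.contDiff_sin.of_le le_top
  have ccos : ContDiff ℝ 1 Real.cos := Real.contDiff_cos.of_le le_top
  have csin2 : ContDiff ℝ 1 (fun s : ℝ => Real.sin (2*s)) :=
    csin.comp (contDiff_const.mul contDiff_id)
  have ccos2 : ContDiff ℝ 1 (fun s : ℝ => Real.cos (2*s)) :=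
    ccos.comp (contDiff_const.mul contDiff_id)
  have csin4 : ContDiff ℝ 1 (fun s : ℝ => Real.sin (4*s)) :=
    csin.comp (contDiff_const.mul contDiff_id)
  have ccos4 : ContDiff ℝ 1 (fun s : ℝ => Real.cos (4*s)) :=
    ccos.comp (contDiff_const.mul contDiff_id)
  have hsm_gg : ContDiff ℝ 1 gg := by
    unfold gg
    exact ((contDiff_const.add contDiff_id).sub (csin4.div_const 8)).sub (csin2.div_const 4)
  have hsm_ggd : ContDiff ℝ 1 ggd := by
    unfold ggd
    exact (contDiff_const.sub (ccos4.div_const 2)).sub (ccos2.div_const 2)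
  have hsm_cc : ContDiffOn ℝ 1 cc (Ioi (-1/2 : ℝ)) := by
    unfold cc; exact hsm_gg.contDiffOn.inv hUne
  have hsm_gg2 : ContDiff ℝ 1 (fun s => gg s ^ 2) := by
    have : (fun s => gg s ^ 2) = fun s => gg s * gg s := by funext s; ring
    rw [this]; exact hsm_gg.mul hsm_gg
  have hsm_ccd : ContDiffOn ℝ 1 ccd (Ioi (-1/2 : ℝ)) := by
    unfold ccd
    exact hsm_ggd.neg.contDiffOn.div hsm_gg2.contDiffOn
      (fun s hs => pow_ne_zero 2 (hUne s hs))
  have hE : ∀ (m md : ℝ → ℝ), ContDiff ℝ 1 m → ContDiff ℝ 1 md →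
      ContDiffOn ℝ 1 (fun s => ccd s * m s + cc s * md s) (Ioi (-1/2 : ℝ)) :=
    fun m md hm hmd => (hsm_ccd.mul hm.contDiffOn).add (hsm_cc.mul hmd.contDiffOn)
  have h00 := hE m00 m00d (by unfold m00; exact csin2.pow 2)
    (by unfold m00d; exact (contDiff_const.mul csin2).mul ccos2)
  have h01 := hE m01 m01d (by unfold m01; exact csin2.mul csin)
    (by unfold m01d; exact ((contDiff_const.mul ccos2).mul csin).add (csin2.mul ccos))
  have h11 := hE m11 m11d (by unfold m11; exact csin.pow 2)
    (by unfold m11d; exact (contDiff_const.mul csin).mul ccos)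
  have hdecomp : Qmat = fun s =>
      (-3 - 2*(ccd s * m00 s + cc s * m00d s)) • (!![1,0;0,0] : Matrix (Fin 2) (Fin 2) ℝ)
      + (-2*(ccd s * m01 s + cc s * m01d s)) • !![0,1;0,0]
      + (-2*(ccd s * m01 s + cc s * m01d s)) • !![0,0;1,0]
      + (-2*(ccd s * m11 s + cc s * m11d s)) • !![0,0;0,1] := by
    funext s
    ext i j
    fin_cases i <;> fin_cases j <;>
      simp [Qmat, e00, e01, e11, Matrix.add_apply, Matrix.smul_apply]
  rw [hdecomp]
  exact ((((contDiffOn_const.sub (contDiffOn_const.mul h00)).smul contDiffOn_const).add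
    ((contDiffOn_const.mul h01).smul contDiffOn_const)).add
    ((contDiffOn_const.mul h01).smul contDiffOn_const)).add
    ((contDiffOn_const.mul h11).smul contDiffOn_const)
end EPotAux2

/-- With `Φ(x) = (sin 2x, sin x)` and
`Q(x) = diag(-3,0) - 2 (d/dx)[Φ(x)·Φ(x)ᵀ / (1 + ∫₀ˣ (sin²2t + sin²t) dt)]`, the matrix
function `Q` is continuously differentiable on `[0,π]` and does not commute with its
(entrywise) derivative at some point of `(0,π)`; in particular the matrices `Q(x)` are not
simultaneously diagonalizable. -/
theorem example_potential_not_simultaneously_diagonalizable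
    (Q : ℝ → Matrix (Fin 2) (Fin 2) ℝ)
    (hQ : ∀ x : ℝ, Q x = !![(-3:ℝ), 0; 0, 0] - (2:ℝ) • deriv (fun s =>
      (1 + ∫ t in (0:ℝ)..s, (Real.sin (2 * t)) ^ 2 + (Real.sin t) ^ 2)⁻¹
        • Matrix.vecMulVec ![Real.sin (2 * s), Real.sin s]
            ![Real.sin (2 * s), Real.sin s]) x)
    -- `Q'` is the entrywise derivative of `Q`
    (Q' : ℝ → Matrix (Fin 2) (Fin 2) ℝ)
    (hQ' : ∀ x (i j : Fin 2), Q' x i j = deriv (fun s => Q s i j) x) :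
    ContDiffOn ℝ 1 Q (Set.Icc 0 Real.pi) ∧
    (∃ x ∈ Set.Ioo (0:ℝ) Real.pi, Q x * Q' x ≠ Q' x * Q x) ∧
    ¬ ∃ U : Matrix (Fin 2) (Fin 2) ℝ, IsUnit U ∧
        ∀ x ∈ Set.Icc (0:ℝ) Real.pi, (U⁻¹ * Q x * U).IsDiag := by
  have hpi := Real.pi_pos
  have hQF : ∀ y : ℝ, Q y = !![(-3:ℝ), 0; 0, 0] - (2:ℝ) • deriv Finner y := hQ
  have hQe : ∀ s : ℝ, -1/2 < s → Q s = Qmat s := by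
    intro s hs
    have hg : gg s ≠ 0 := ne_of_gt (gg_pos hs)
    erw [hQF s, (hFderiv hg).deriv]
    unfold Qmat
    ext i j
    fin_cases i <;> fin_cases j <;>
      simp [Matrix.sub_apply, Matrix.smul_apply]
  have hGpos : (0:ℝ) < 1 + Real.pi/2 := by linarith
  have hGne : (1:ℝ) + Real.pi/2 ≠ 0 := ne_of_gt hGpos
  have hx05 : -1/2 < Real.pi/2 := by linarith
  have hQx : Q (Real.pi/2) = !![-3, 4/(1+Real.pi/2); 4/(1+Real.pi/2), 2/(1+Real.pi/2)^2] := by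
    rw [hQe _ hx05, hQmatx]
  have hQ0 : Q 0 = !![-3, 0; 0, 0] := by
    rw [hQe 0 (by norm_num), hQmat0]
  have hev : ∀ i j : Fin 2, (fun s => Q s i j) =ᶠ[nhds (Real.pi/2:ℝ)] (fun s => Qmat s i j) := by
    intro i j
    filter_upwards [eventually_gt_nhds hx05] with s hs
    rw [hQe s hs]
  have hQ'x : Q' (Real.pi/2) =
      !![-16/(1+Real.pi/2), -8/(1+Real.pi/2)^2; -8/(1+Real.pi/2)^2, 4/(1+Real.pi/2) - 4/(1+Real.pi/2)^3] := by
    ext i j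
    rw [hQ' (Real.pi/2) i j, (hev i j).deriv_eq]
    fin_cases i <;> fin_cases j
    · simpa using hder00
    · simpa using hder01
    · simpa using hder10
    · simpa using hder11
  refine ⟨?_, ⟨Real.pi/2, ⟨by linarith, by linarith⟩, ?_⟩, ?_⟩
  · -- smoothness
    have h1 : ContDiffOn ℝ 1 Q (Ioi (-1/2 : ℝ)) :=
      hsmQmat.congr (fun s hs => hQe s hs)
    exact h1.mono (fun s hs => lt_of_lt_of_le (by norm_num) hs.1)
  · -- noncommutation at Real.pi/2
    intro hcontr
    rw [hQx, hQ'x, Matrix.mul_fin_two, Matrix.mul_fin_two] at hcontr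
    have h01 := congrFun (congrFun hcontr 0) 1
    simp only [Matrix.of_apply, Matrix.cons_val', Matrix.cons_val_zero, Matrix.cons_val_one,
      Matrix.head_cons, Matrix.empty_val', Matrix.cons_val_fin_one, Matrix.head_fin_const] at h01
    have hGG : ∀ y : ℝ, 0 < y →
        -3 * (-8/y^2) + 4/y * (4/y - 4/y^3) = -16/y * (4/y) + -8/y^2 * (2/y^2) → False := by
      intro y hy h
      have hyne : y ≠ 0 := ne_of_gt hy
      field_simp at h
      nlinarith [pow_pos hy 2, pow_pos hy 4, pow_pos hy 6, pow_pos hy 8, sq_nonneg y]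
    exact hGG _ hGpos h01
  · -- not simultaneously diagonalizable
    rintro ⟨U, hU, hdiag⟩
    have hUdet : IsUnit U.det := (Matrix.isUnit_iff_isUnit_det U).1 hU
    have hDcomm : ∀ (A B : Matrix (Fin 2) (Fin 2) ℝ), A.IsDiag → B.IsDiag → A * B = B * A := by
      intro A B hA hB
      have a01 : A 0 1 = 0 := hA (by decide)
      have a10 : A 1 0 = 0 := hA (by decide)
      have b01 : B 0 1 = 0 := hB (by decide)
      have b10 : B 1 0 = 0 := hB (by decide)
      ext i j
      fin_cases i <;> fin_cases j <;>
        simp [Matrix.mul_apply, Fin.sum_univ_two, a01, a10, b01, b10] <;> ring1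
    have hconj : ∀ C : Matrix (Fin 2) (Fin 2) ℝ, U * (U⁻¹ * C * U) * U⁻¹ = C := by
      intro C
      calc U * (U⁻¹ * C * U) * U⁻¹
          = U * U⁻¹ * C * (U * U⁻¹) := by simp only [Matrix.mul_assoc]
        _ = C := by rw [Matrix.mul_nonsing_inv U hUdet]; simp
    have hcommQ : ∀ A B : ℝ, A ∈ Icc (0:ℝ) Real.pi → B ∈ Icc (0:ℝ) Real.pi → Q A * Q B = Q B * Q A := by
      intro A B hA hB
      have h := hDcomm _ _ (hdiag A hA) (hdiag B hB)
      calc Q A * Q B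
          = (U * (U⁻¹ * Q A * U) * U⁻¹) * (U * (U⁻¹ * Q B * U) * U⁻¹) := by
            rw [hconj, hconj]
        _ = U * ((U⁻¹ * Q A * U) * (U⁻¹ * Q B * U)) * U⁻¹ := by
            simp only [Matrix.mul_assoc, Matrix.nonsing_inv_mul_cancel_left _ _ hUdet]
        _ = U * ((U⁻¹ * Q B * U) * (U⁻¹ * Q A * U)) * U⁻¹ := by rw [h]
        _ = (U * (U⁻¹ * Q B * U) * U⁻¹) * (U * (U⁻¹ * Q A * U) * U⁻¹) := by
            simp only [Matrix.mul_assoc, Matrix.nonsing_inv_mul_cancel_left _ _ hUdet]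
        _ = Q B * Q A := by rw [hconj, hconj]
    have hkey := hcommQ 0 (Real.pi/2) ⟨le_refl _, le_of_lt hpi⟩ ⟨by linarith, by linarith⟩
    rw [hQ0, hQx, Matrix.mul_fin_two, Matrix.mul_fin_two] at hkey
    have h10 := congrFun (congrFun hkey 1) 0
    simp only [Matrix.of_apply, Matrix.cons_val', Matrix.cons_val_zero, Matrix.cons_val_one,
      Matrix.head_cons, Matrix.empty_val', Matrix.cons_val_fin_one, Matrix.head_fin_const] at h10
    -- h10 : 0 * -3 + 0 * (4/(1+Real.pi/2)) = 4/(1+Real.pi/2) * -3 + 2/(1+Real.pi/2)^2 * 0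
    field_simp at h10
    nlinarith [hpi]
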